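/- If a DNNF D contains a transitive edge, then D cannot be covered by separators. -/

import Mathlib

set_option autoImplicit false

universe u v

/-- A literal: a boolean variable together with a polarity. -/
structure Lit (V : Type u) where
  var : V
  pos : Bool

/-- The complementary literal. -/
def Lit.negate {V : Type u} (l : Lit V) : Lit V := ⟨l.var, !l.pos⟩

/-- A literal is satisfied by a total assignment. -/
def Lit.eval {V : Type u} (a : V → Bool) (l : Lit V) : Prop := a l.var = l.pos

/-- A clause is a (finite in all our uses) disjunction of a set of literals. -/
abbrev Clause (V : Type u) := Set (Lit V)

/-- A CNF formula is a conjunction of a set of clauses. -/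
abbrev CNF (V : Type u) := Set (Clause V)

/-- A clause is satisfied iff some of its literals is. -/
def Clause.Sat {V : Type u} (a : V → Bool) (C : Clause V) : Prop := ∃ l ∈ C, Lit.eval a l

/-- A CNF formula is satisfied iff all of its clauses are. -/
def CNF.Sat {V : Type u} (a : V → Bool) (φ : CNF V) : Prop := ∀ C ∈ φ, Clause.Sat a C

def CNF.Satisfiable {V : Type u} (φ : CNF V) : Prop := ∃ a : V → Bool, CNF.Sat a φ

/-- `φ ⊨ l`. -/
def CNF.Entails {V : Type u} (φ : CNF V) (l : Lit V) : Prop :=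
  ∀ a : V → Bool, CNF.Sat a φ → Lit.eval a l

/-- A partial assignment, i.e. a set of literals, is consistent if it contains
no complementary pair of literals. -/
def ConsistentPA {V : Type u} (α : Set (Lit V)) : Prop := ∀ l ∈ α, Lit.negate l ∉ α

/-- The set of unit clauses corresponding to a partial assignment `α`;
`φ ∪ paUnits α` represents `φ ∧ α`. -/
def paUnits {V : Type u} (α : Set (Lit V)) : CNF V := (fun l => ({l} : Clause V)) '' α

/-- Derivability by repeated unit resolution: from a clause `C ∋ l` and the unit
clause `¬l` derive `C \ {l}`.  `UnitDeriv φ ∅` means `φ ⊢₁ ⊥` and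
`UnitDeriv φ {l}` means `φ ⊢₁ l`. -/
inductive UnitDeriv {V : Type u} (φ : CNF V) : Clause V → Prop where
  | base {C : Clause V} : C ∈ φ → UnitDeriv φ C
  | step {C : Clause V} (l : Lit V) : l ∈ C → UnitDeriv φ C →
      UnitDeriv φ {Lit.negate l} → UnitDeriv φ (C \ {l})

/-- The set of variables occurring in a CNF formula. -/
def CNF.vars {V : Type u} (φ : CNF V) : Set V := ⋃ C ∈ φ, Lit.var '' C

/-- All literals of `α` are literals on the variables `W`. -/
def LitsOn {V : Type u} (α : Set (Lit V)) (W : Set V) : Prop := ∀ l ∈ α, l.var ∈ W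

/-- `φ` is unit refutation complete on the variables `W`. -/
def URCon {V : Type u} (φ : CNF V) (W : Set V) : Prop :=
  ∀ α : Set (Lit V), ConsistentPA α → LitsOn α W →
    ¬ CNF.Satisfiable (φ ∪ paUnits α) → UnitDeriv (φ ∪ paUnits α) ∅

/-- `φ` is propagation complete on the variables `W`. -/
def PCon {V : Type u} (φ : CNF V) (W : Set V) : Prop :=
  ∀ α : Set (Lit V), ConsistentPA α → LitsOn α W →
    ∀ l : Lit V, l.var ∈ W → CNF.Entails (φ ∪ paUnits α) l →
      UnitDeriv (φ ∪ paUnits α) {l} ∨ UnitDeriv (φ ∪ paUnits α) ∅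

/-- `φ` is a CNF encoding of the function `f` with input variables `X`
(the remaining variables of `φ` being auxiliary); `f` is assumed to depend
only on the values of the variables in `X`. -/
def IsEncodingOn {V : Type u} (φ : CNF V) (X : Set V) (f : (V → Bool) → Prop) : Prop :=
  ∀ a : V → Bool, f a ↔ ∃ b : V → Bool, (∀ x ∈ X, b x = a x) ∧ CNF.Sat b φ

/-- The positive literal on a variable. -/
def posL {V : Type u} (x : V) : Lit V := ⟨x, true⟩
/-- The negative literal on a variable. -/
def negL {V : Type u} (x : V) : Lit V := ⟨x, false⟩

/-! ## Smooth DNNFs over variables with finite domains -/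

/-- The label of a node of an NNF: an ∧-node, an ∨-node, or a leaf labeled
with the domain variable `⟦x_i = s⟧`. -/
inductive NLabel (n : ℕ) : Type where
  | And : NLabel n
  | Or : NLabel n
  | Leaf : Fin n → ℕ → NLabel n

/-- An NNF: a rooted DAG whose inner nodes are labeled `∧` or `∨` and whose
leaves are labeled with domain variables `⟦x_i = s⟧` (`s ∈ Dom i`) of the
variables `x₁, …, xₙ` with finite domains `Dom i`.  The edge `edge v u` means
that `u` is a child (an input) of `v`.  Well-formedness conditions are
collected in `NNF.WF`. -/
structure NNF : Type 1 where
  /-- the nodes -/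
  N : Type
  /-- `edge v u`: there is an edge from `v` to its child `u` -/
  edge : N → N → Prop
  /-- the root -/
  root : N
  /-- the number of variables -/
  n : ℕ
  /-- the (finite, non-empty) domains of the variables -/
  Dom : Fin n → Set ℕ
  /-- the label of each node -/
  label : N → NLabel n

namespace NNF

/-- Reachability along directed edges. -/
def Reach (D : NNF) (v u : D.N) : Prop := Relation.ReflTransGen D.edge v u

/-- `var(v)`: the set of variables `x_i` such that a leaf labeled with a domain
variable of `x_i` is reachable from `v`. -/
def varsOf (D : NNF) (v : D.N) : Set (Fin D.n) :=
  {i | ∃ u s, D.Reach v u ∧ D.label u = NLabel.Leaf i s}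

/-- `v` is a leaf. -/
def IsLeaf (D : NNF) (v : D.N) : Prop := ∃ i s, D.label v = NLabel.Leaf i s

/-- `H_i`: the set of nodes `v` with `x_i ∈ var(v)`; the subgraph of `D`
induced on `H_i` is `D_i`. -/
def H (D : NNF) (i : Fin D.n) : Set D.N := {v | i ∈ D.varsOf v}

/-- `L_i`: the set of leaves labeled with domain variables of `x_i`. -/
def Lset (D : NNF) (i : Fin D.n) : Set D.N := {v | ∃ s, D.label v = NLabel.Leaf i s}

/-- Well-formedness of an NNF: the domains are non-empty; the edge relation is
well-founded (the DAG is acyclic); leaves are labeled with domain variables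
(`s ∈ Dom i`) and have no outgoing edges; each domain variable labels at most
one leaf; every node is reachable from the root; for each `i` at least one
domain variable of `x_i` labels a leaf; and every node has a leaf below it
(no node represents a constant). -/
def WF (D : NNF) : Prop :=
  (∀ i, (D.Dom i).Nonempty) ∧
  WellFounded (fun u v : D.N => D.edge v u) ∧
  (∀ v i s, D.label v = NLabel.Leaf i s → s ∈ D.Dom i) ∧
  (∀ v i s, D.label v = NLabel.Leaf i s → ∀ u, ¬ D.edge v u) ∧
  (∀ v w i s, D.label v = NLabel.Leaf i s → D.label w = NLabel.Leaf i s → v = w) ∧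
  (∀ v, D.Reach D.root v) ∧
  (∀ i, ∃ v s, D.label v = NLabel.Leaf i s) ∧
  (∀ v, ∃ i, i ∈ D.varsOf v)

/-- Decomposability: the children of every ∧-node have pairwise disjoint sets
of variables. -/
def Decomposable (D : NNF) : Prop :=
  ∀ v, D.label v = NLabel.And →
    ∀ u₁ u₂, D.edge v u₁ → D.edge v u₂ → u₁ ≠ u₂ →
      Disjoint (D.varsOf u₁) (D.varsOf u₂)

/-- Smoothness: every child of an ∨-node `v` has the same variables as `v`. -/
def Smooth (D : NNF) : Prop :=
  ∀ v u, D.label v = NLabel.Or → D.edge v u → D.varsOf u = D.varsOf v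

/-- A node of `D` evaluates to `true` under the assignment `a` of the domain
variables, where the children are taken with respect to the edge relation `E`
(this generality is used when edges are removed from `D`). -/
inductive EvalWith (D : NNF) (E : D.N → D.N → Prop) (a : Fin D.n × ℕ → Bool) : D.N → Prop where
  | leaf {v : D.N} {i : Fin D.n} {s : ℕ} :
      D.label v = NLabel.Leaf i s → a (i, s) = true → EvalWith D E a v
  | and {v : D.N} : D.label v = NLabel.And →
      (∀ u, E v u → EvalWith D E a u) → EvalWith D E a v
  | or {v u : D.N} : D.label v = NLabel.Or → E v u →
      EvalWith D E a u → EvalWith D E a v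

/-- A node of `D` evaluates to `true` under the assignment `a`. -/
def EvalTrue (D : NNF) (a : Fin D.n × ℕ → Bool) (v : D.N) : Prop :=
  D.EvalWith D.edge a v

/-- `f_D(⟦x⟧)`: the monotone boolean function of the domain variables computed
by `D`. -/
def fD (D : NNF) (a : Fin D.n × ℕ → Bool) : Prop := D.EvalTrue a D.root

/-- The direct encoding constraints: for each `i` exactly one domain variable
of `x_i` is true. -/
def DConsistent (D : NNF) (a : Fin D.n × ℕ → Bool) : Prop :=
  ∀ i, ∃! s, s ∈ D.Dom i ∧ a (i, s) = true

/-- `f_D'(⟦x⟧)`: the conjunction of `f_D` and the direct encoding constraints. -/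
def fD' (D : NNF) (a : Fin D.n × ℕ → Bool) : Prop := D.fD a ∧ D.DConsistent a

/-- A subgraph of `D`: a set of nodes together with a set of edges of `D`
between them. -/
structure Subgraph (D : NNF) : Type where
  mem : Set D.N
  tedge : D.N → D.N → Prop
  le_edge : ∀ {v u}, tedge v u → D.edge v u
  mem_left : ∀ {v u}, tedge v u → v ∈ mem
  mem_right : ∀ {v u}, tedge v u → u ∈ mem

/-- A minimal satisfying subtree of `D`: a rooted subtree (out-arborescence)
of `D` whose root is the root of `D`, which contains all the `D`-edges out of
each of its ∧-nodes and exactly one `D`-edge out of each of its ∨-nodes. -/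
def IsMST (D : NNF) (T : D.Subgraph) : Prop :=
  D.root ∈ T.mem ∧
  (∀ v ∈ T.mem, Relation.ReflTransGen T.tedge D.root v) ∧
  (∀ v ∈ T.mem, v ≠ D.root → ∃! u, T.tedge u v) ∧
  (∀ u, ¬ T.tedge u D.root) ∧
  (∀ v ∈ T.mem, D.label v = NLabel.And → ∀ u, D.edge v u → T.tedge v u) ∧
  (∀ v ∈ T.mem, D.label v = NLabel.Or → ∃! u, T.tedge v u)

/-- `β_T`: the total assignment of the domain variables that sets to `1`
exactly the domain variables labeling the leaves of `T`. -/
noncomputable def beta (D : NNF) (T : D.Subgraph) : Fin D.n × ℕ → Bool :=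
  fun p => @decide (∃ v ∈ T.mem, D.label v = NLabel.Leaf p.1 p.2)
    (Classical.propDecidable _)

/-- A root-to-leaf path in `D_i` (the subgraph of `D` induced on `H_i`),
represented by the list of its nodes. -/
def IsRLPath (D : NNF) (i : Fin D.n) (p : List D.N) : Prop :=
  p ≠ [] ∧ (∀ v ∈ p, v ∈ D.H i) ∧ List.Chain' D.edge p ∧
  p.head? = some D.root ∧ ∃ t, p.getLast? = some t ∧ t ∈ D.Lset i

/-- A separator in `D_i`: a set `S ⊆ H_i` such that every path in `D_i` from
the root to a leaf contains precisely one node of `S`. -/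
def IsSeparator (D : NNF) (i : Fin D.n) (S : Set D.N) : Prop :=
  S ⊆ D.H i ∧ ∀ p, D.IsRLPath i p → ∃! w, w ∈ p ∧ w ∈ S

/-- `D` is covered by the collections `𝒮 i` of separators: each `S ∈ 𝒮 i` is a
separator in `D_i` and the union of `𝒮 i` is `H_i ∖ {ρ}`. -/
def CoveredBy (D : NNF) (𝒮 : ∀ _ : Fin D.n, Set (Set D.N)) : Prop :=
  ∀ i, (∀ S ∈ 𝒮 i, D.IsSeparator i S) ∧ ⋃₀ 𝒮 i = D.H i \ {D.root}

/-- `D` can be covered by separators. -/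
def Covered (D : NNF) : Prop := ∃ 𝒮, D.CoveredBy 𝒮

end NNF


section Stmt11Aux

variable {A : Type} {r : A → A → Prop}

private lemma exists_chain_of_rtg {a b : A} (h : Relation.ReflTransGen r a b) :
    ∃ p : List A, p ≠ [] ∧ p.head? = some a ∧ p.getLast? = some b ∧ p.Chain' r := by
  induction h with
  | refl => exact ⟨[a], by simp, rfl, rfl, List.isChain_singleton a⟩
  | @tail b c hab hbc ih =>
    obtain ⟨p, hne, hh, hl, hc⟩ := ih
    refine ⟨p ++ [c], by simp, ?_, by simp [List.getLast?_concat], ?_⟩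
    · cases p with
      | nil => exact absurd rfl hne
      | cons y p' => simpa using hh
    · refine hc.append (List.isChain_singleton c) ?_
      intro x hx y hy
      rw [hl] at hx
      simp only [Option.mem_def, Option.some.injEq] at hx
      simp only [List.head?_cons, Option.mem_def, Option.some.injEq] at hy
      subst hx; subst hy; exact hbc

private lemma rtg_to_last : ∀ {p : List A}, p.Chain' r → ∀ {x b : A}, x ∈ p →
    p.getLast? = some b → Relation.ReflTransGen r x b := by
  intro p
  induction p with
  | nil => simp
  | cons y rest ih =>
    intro hc x b hx hl
    cases rest with
    | nil =>
      simp only [List.mem_singleton] at hx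
      simp only [List.getLast?_singleton, Option.some.injEq] at hl
      subst hx; subst hl; exact Relation.ReflTransGen.refl
    | cons z rest' =>
      have hl' : (z :: rest').getLast? = some b := by
        rw [← hl]; simp [List.getLast?_cons_cons]
      obtain ⟨hyz, hc'⟩ := List.isChain_cons_cons.mp hc
      rcases List.mem_cons.mp hx with rfl | hx'
      · exact Relation.ReflTransGen.head hyz (ih hc' List.mem_cons_self hl')
      · exact ih hc' hx' hl'

private lemma rtg_from_head : ∀ {p : List A}, p.Chain' r → ∀ {a x : A}, p.head? = some a →
    x ∈ p → Relation.ReflTransGen r a x := by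
  intro p
  induction p with
  | nil => simp
  | cons y rest ih =>
    intro hc a x hh hx
    simp only [List.head?_cons, Option.some.injEq] at hh
    subst hh
    rcases List.mem_cons.mp hx with rfl | hx'
    · exact Relation.ReflTransGen.refl
    · cases rest with
      | nil => simp at hx'
      | cons z rest' =>
        obtain ⟨hyz, hc'⟩ := List.isChain_cons_cons.mp hc
        exact Relation.ReflTransGen.head hyz (ih hc' rfl hx')

end Stmt11Aux

/-- If a DNNF `D` contains a transitive edge, then `D`
cannot be covered by separators. -/
theorem stmt11 (D : NNF) (hwf : D.WF) (hdec : D.Decomposable)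
    (v u : D.N) (hvu : D.edge v u)
    (hpath : Relation.TransGen
      (fun p q => D.edge p q ∧ ¬ (p = v ∧ q = u)) v u) :
    ¬ D.Covered := by
  obtain ⟨-, hacy, -, -, -, hroot, -, hnodevar⟩ := hwf
  have hacyc : ∀ a : D.N, ¬ Relation.TransGen D.edge a a := by
    intro a h
    have h' : Relation.TransGen (fun u v : D.N => D.edge v u) a a :=
      Relation.transGen_swap.mp h
    exact (hacy.transGen).induction
      (C := fun x => ¬ Relation.TransGen (fun p q : D.N => D.edge q p) x x) a
      (fun x ih hx => ih x hx hx) h'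
  -- intermediate node w
  obtain ⟨w, hvw0, hwu0⟩ := Relation.TransGen.head'_iff.mp hpath
  have hvw : D.edge v w := hvw0.1
  have hwne : w ≠ u := fun h => hvw0.2 ⟨rfl, h⟩
  have hwu : D.Reach w u :=
    Relation.ReflTransGen.mono (p := D.edge) (fun p q h => h.1) w u hwu0
  -- variable i and leaf t below u
  obtain ⟨i, t, s, hut, hts⟩ := hnodevar u
  have hHmem : ∀ z : D.N, D.Reach z t → z ∈ D.H i := fun z hz => ⟨t, s, hz, hts⟩
  -- path lists
  obtain ⟨R, hRne, hRh, hRl, hRc⟩ := exists_chain_of_rtg (hroot v)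
  obtain ⟨Q, hQne, hQh, hQl, hQc⟩ := exists_chain_of_rtg hut
  obtain ⟨M, hMne, hMh, hMl, hMc⟩ := exists_chain_of_rtg hwu
  obtain ⟨u₀, Q', rfl⟩ := List.exists_cons_of_ne_nil hQne
  have hu0 : u₀ = u := by simpa using hQh
  rw [hu0] at hQl hQc
  clear hQh hQne hu0
  have hQ'c : Q'.Chain' D.edge := (List.isChain_cons.mp hQc).2
  have hQ'head : ∀ y ∈ Q'.head?, D.edge u y := (List.isChain_cons.mp hQc).1
  have huM : u ∈ M := List.mem_of_mem_getLast? (by rw [hMl]; rfl)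
  have hwM : w ∈ M := List.mem_of_mem_head? (by rw [hMh]; rfl)
  -- membership in H i
  have hRmem : ∀ z ∈ R, z ∈ D.H i := fun z hz =>
    hHmem z (((rtg_to_last hRc hz hRl).trans (Relation.ReflTransGen.single hvu)).trans hut)
  have hMmem : ∀ z ∈ M, z ∈ D.H i := fun z hz =>
    hHmem z ((rtg_to_last hMc hz hMl).trans hut)
  have hQmem : ∀ z ∈ u :: Q', z ∈ D.H i := fun z hz =>
    hHmem z (rtg_to_last hQc hz hQl)
  -- the two root-to-leaf paths
  set P1 : List D.N := R ++ (u :: Q') with hP1def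
  set P2 : List D.N := R ++ (M ++ Q') with hP2def
  have hheadR : ∀ L : List D.N, (R ++ L).head? = some D.root := by
    intro L
    cases R with
    | nil => exact absurd rfl hRne
    | cons y R' => simpa using hRh
  have hP1path : D.IsRLPath i P1 := by
    refine ⟨by simp [hP1def], ?_, ?_, hheadR _, t, ?_, ⟨s, hts⟩⟩
    · intro z hz
      rcases List.mem_append.mp hz with hz | hz
      · exact hRmem z hz
      · exact hQmem z hz
    · refine hRc.append hQc ?_
      intro x hx y hy
      rw [hRl] at hx
      simp only [Option.mem_def, Option.some.injEq] at hx
      simp only [List.head?_cons, Option.mem_def, Option.some.injEq] at hy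
      subst hx; subst hy; exact hvu
    · rw [hP1def, List.getLast?_append, hQl]; rfl
  have hMQc : (M ++ Q').Chain' D.edge := by
    refine hMc.append hQ'c ?_
    intro x hx y hy
    rw [hMl] at hx
    simp only [Option.mem_def, Option.some.injEq] at hx
    subst hx
    exact hQ'head y hy
  have hP2path : D.IsRLPath i P2 := by
    refine ⟨?_, ?_, ?_, hheadR _, t, ?_, ⟨s, hts⟩⟩
    · rw [hP2def]
      simp [hRne]
    · intro z hz
      rcases List.mem_append.mp hz with hz | hz
      · exact hRmem z hz
      rcases List.mem_append.mp hz with hz | hz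
      · exact hMmem z hz
      · exact hQmem z (List.mem_cons_of_mem _ hz)
    · refine hRc.append hMQc ?_
      intro x hx y hy
      rw [hRl] at hx
      simp only [Option.mem_def, Option.some.injEq] at hx
      subst hx
      cases M with
      | nil => exact absurd rfl hMne
      | cons m M' =>
        have : m = w := by simpa using hMh
        subst this
        simp only [List.cons_append, List.head?_cons, Option.mem_def,
          Option.some.injEq] at hy
        subst hy
        exact hvw
    · cases Q' with
      | nil =>
        have htu : t = u := by simpa using hQl.symm
        rw [hP2def, List.getLast?_append, List.getLast?_append]
        simp [hMl, htu]
      | cons q Q'' =>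
        have : (q :: Q'').getLast? = some t := by
          rw [← hQl]; simp [List.getLast?_cons_cons]
        rw [hP2def, List.getLast?_append, List.getLast?_append, this]
        rfl
  -- w is not on P1
  have hwP1 : w ∉ P1 := by
    intro hw
    rcases List.mem_append.mp hw with hw | hw
    · exact hacyc w (Relation.TransGen.tail' (rtg_to_last hRc hw hRl) hvw)
    · have h1 : Relation.ReflTransGen D.edge u w := rtg_from_head hQc rfl hw
      have h2 : Relation.TransGen D.edge w u :=
        (Relation.reflTransGen_iff_eq_or_transGen.mp hwu).resolve_left
          (fun h => hwne h.symm)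
      exact hacyc w (Relation.TransGen.trans_left h2 h1)
  have hwP2 : w ∈ P2 := List.mem_append.mpr (Or.inr (List.mem_append.mpr (Or.inl hwM)))
  -- unfold the covering
  rintro ⟨𝒮, hS⟩
  obtain ⟨hsep, huni⟩ := hS i
  have hwroot : w ≠ D.root := by
    intro h
    exact hacyc w (Relation.TransGen.tail' (h ▸ hroot v) hvw)
  have hwHd : w ∈ ⋃₀ 𝒮 i := by
    rw [huni]
    exact ⟨hHmem w (hwu.trans hut), hwroot⟩
  obtain ⟨S, hSmem, hwS⟩ := hwHd
  have hsepS := (hsep S hSmem).2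
  obtain ⟨z, ⟨hz1, hzS⟩, -⟩ := hsepS P1 hP1path
  obtain ⟨z', -, huniq2⟩ := hsepS P2 hP2path
  have hz2 : z ∈ P2 := by
    rcases List.mem_append.mp hz1 with hz | hz
    · exact List.mem_append.mpr (Or.inl hz)
    · rcases List.mem_cons.mp hz with rfl | hz
      · exact List.mem_append.mpr (Or.inr (List.mem_append.mpr (Or.inl huM)))
      · exact List.mem_append.mpr (Or.inr (List.mem_append.mpr (Or.inr hz)))
  have e1 : z = z' := huniq2 z ⟨hz2, hzS⟩
  have e2 : w = z' := huniq2 w ⟨hwP2, hwS⟩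
  rw [← e1] at e2
  exact hwP1 (e2 ▸ hz1)
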